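/- arXiv:2509.00948 — 7 statements merged into one kernel-verified Lean document; each statement's English description precedes it below -/
import Mathlib

section
/- The range of the encoding of string sequences is exactly the regular language †(Σ*†)*: a string w over Σ ∪ {†} equals enc(s) for some string sequence s if and only if w belongs to the language {[†]} * ({v : v is a string over Σ ∪ {†} with † not occurring in v} * {[†]})⋆, where * denotes language concatenation and ⋆ denotes Kleene star. -/
open Computability

/-- The encoding of a string sequence `s = [u₀, …, u_{m−1}]` over `Σ` as the string
`† u₀ † u₁ † ⋯ † u_{m−1} †` over `Σ ∪ {†}`, modelled as `Option Σ` with `none` as `†`. -/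
def enc {σ : Type*} (s : List (List σ)) : List (Option σ) :=
  [none] ++ s.flatMap (fun u => u.map some ++ [none])

/-- The language `{[†]}` consisting of the single one-letter string `†`. -/
def sepLang (σ : Type*) : Language (Option σ) := {[none]}

/-- The language of strings over `Σ ∪ {†}` in which `†` does not occur (i.e. `Σ*`). -/
def noSepLang (σ : Type*) : Language (Option σ) := {v : List (Option σ) | none ∉ v}

lemma exists_map_some {σ : Type*} {v : List (Option σ)} (h : none ∉ v) :
    ∃ u : List σ, v = u.map some := by
  induction v with
  | nil => exact ⟨[], rfl⟩
  | cons a t ih =>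
    obtain ⟨u, hu⟩ := ih (fun h' => h (List.mem_cons_of_mem _ h'))
    cases a with
    | none => simp at h
    | some b => exact ⟨b :: u, by simp [hu]⟩

lemma join_of_mem {σ : Type*} (L : List (List (Option σ)))
    (hL : ∀ y ∈ L, y ∈ noSepLang σ * sepLang σ) :
    ∃ s : List (List σ), s.flatMap (fun u => u.map some ++ [none]) = L.flatten := by
  induction L with
  | nil => exact ⟨[], rfl⟩
  | cons y t ih =>
    obtain ⟨s, hs⟩ := ih (fun z hz => hL z (List.mem_cons_of_mem _ hz))
    obtain ⟨v, hv, z, hz, rfl⟩ := hL y List.mem_cons_self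
    obtain ⟨u, rfl⟩ := exists_map_some hv
    rw [Set.mem_singleton_iff.mp hz]
    exact ⟨u :: s, by simp [hs]⟩

/-- The range of the encoding of string sequences is exactly the regular language
`†(Σ*†)*`: a string `w` over `Σ ∪ {†}` equals `enc s` for some string sequence `s`
iff `w ∈ {[†]} * ({v | † ∉ v} * {[†]})⋆`. -/
theorem enc_range {σ : Type*} (w : List (Option σ)) :
    (∃ s : List (List σ), enc s = w) ↔
      w ∈ sepLang σ * (noSepLang σ * sepLang σ)∗ := by
  constructor
  · rintro ⟨s, rfl⟩
    refine ⟨[none], rfl, s.flatMap (fun u => u.map some ++ [none]), ?_, rfl⟩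
    refine Language.mem_kstar.mpr ?_
    refine ⟨s.map (fun u => u.map some ++ [none]), by rw [List.flatMap_def], ?_⟩
    rintro y hy
    simp only [List.mem_map] at hy
    obtain ⟨u, -, rfl⟩ := hy
    exact ⟨u.map some, by simp [noSepLang], [none], rfl, rfl⟩
  · rintro ⟨a, ha, b, hb, rfl⟩
    rw [Set.mem_singleton_iff.mp ha]
    replace hb := Language.mem_kstar.mp hb
    obtain ⟨L, rfl, hL⟩ := hb
    obtain ⟨s, hs⟩ := join_of_mem L hL
    exact ⟨s, by simp [enc, hs]⟩
end

section
/- Block decomposition of the encoding: for every string sequence s, splitting the string enc(s) on the separator † yields the list of blocks [] :: (the elements of s, each embedded into Σ ∪ {†} via some) ++ [[]]. Formally, (enc s).splitOn none = [] :: s.map (fun u => u.map some) ++ [[]]. -/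
lemma enc_eq_intercalate {σ : Type*} (s : List (List σ)) :
    enc s = [(none : Option σ)].intercalate ([] :: s.map (fun u => u.map some) ++ [[]]) := by
  induction s with
  | nil => rfl
  | cons u t ih =>
    simp only [enc, List.flatMap_cons] at *
    simp only [List.map_cons, List.cons_append, List.intercalate,
      List.intersperse_cons_cons, List.flatten_cons] at *
    simp only [List.nil_append] at *
    cases ht : t.map (fun u => u.map some) ++ [[]] with
    | nil => simp at ht
    | cons a b =>
      rw [ht] at ih
      simp only [List.intersperse_cons_cons, List.flatten_cons] at ih ⊢
      simp [ih]

/-- Splitting `enc s` on the separator `†` yields the blocks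
`[] :: (elements of s, embedded via some) ++ [[]]`. -/
theorem splitOn_enc {σ : Type*} [DecidableEq σ] (s : List (List σ)) :
    (enc s).splitOn none = [] :: s.map (fun u => u.map some) ++ [[]] := by
  have hinst : (Option.instBEq : BEq (Option σ)) = instBEqOfDecidableEq :=
    lawful_beq_subsingleton _ _
  rw [enc_eq_intercalate]
  rw [show @List.splitOn (Option σ) Option.instBEq = @List.splitOn (Option σ) instBEqOfDecidableEq from by rw [hinst]]
  apply @List.splitOn_intercalate _ _ instBEqOfDecidableEq
  · intro l hl
    simp only [List.cons_append, List.mem_cons, List.mem_append, List.mem_map,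
      List.mem_singleton] at hl
    rcases hl with rfl | ⟨⟨u, _, rfl⟩ | hl⟩ <;> simp_all
  · simp
end

section
/- Correctness of the sequence-read (nth/elem) encoding: let s be a string sequence and i an index with i < length of s. Then there exist strings p and q over Σ ∪ {†} such that enc(s) = p ++ [†] ++ (the i-th element of s, embedded via some) ++ [†] ++ q and the number of occurrences of † in p equals i. Moreover this decomposition characterizes the i-th element: for any strings p, v, q over Σ ∪ {†} with † not occurring in v, if enc(s) = p ++ [†] ++ v ++ [†] ++ q and the number of occurrences of † in p equals i, then v equals the i-th element of s embedded via some. -/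
lemma enc_cons {σ : Type*} (u : List σ) (t : List (List σ)) :
    enc (u :: t) = none :: (u.map some ++ enc t) := by
  simp [enc]

lemma first_none {σ : Type*} : ∀ (a : List (Option σ)) (b c : List (Option σ)) (d : List (Option σ)),
    none ∉ a → none ∉ c → a ++ none :: b = c ++ none :: d → a = c ∧ b = d := by
  intro a
  induction a with
  | nil =>
    intro b c d _ hc h
    cases c with
    | nil => simpa using h
    | cons x c' =>
      simp only [List.nil_append, List.cons_append, List.cons.injEq] at h
      exact absurd (h.1 ▸ List.mem_cons_self) hc
  | cons x a' ih =>
    intro b c d ha hc h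
    cases c with
    | nil =>
      simp only [List.nil_append, List.cons_append, List.cons.injEq] at h
      exact absurd (h.1 ▸ List.mem_cons_self) ha
    | cons y c' =>
      simp only [List.cons_append, List.cons.injEq] at h
      obtain ⟨h1, h2⟩ := ih b c' d (fun m => ha (List.mem_cons_of_mem _ m))
        (fun m => hc (List.mem_cons_of_mem _ m)) h.2
      exact ⟨by rw [h.1, h1], h2⟩

lemma split_first {σ : Type*} {a : Option σ} : ∀ {l : List (Option σ)}, a ∈ l →
    ∃ x y, l = x ++ a :: y ∧ a ∉ x := by
  intro l
  induction l with
  | nil => simp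
  | cons b l' ih =>
    intro hm
    by_cases hb : a = b
    · exact ⟨[], l', by simp [hb], by simp⟩
    · have h' : a ∈ l' := by
        rcases List.mem_cons.1 hm with h | h
        · exact absurd h hb
        · exact h
      obtain ⟨x, y, hxy, hax⟩ := ih h'
      exact ⟨b :: x, y, by simp [hxy], by simp [hax, hb]⟩

lemma enc_exist {σ : Type*} [DecidableEq σ] : ∀ (s : List (List σ)) (i : ℕ) (h : i < s.length),
    ∃ p q, enc s = p ++ [none] ++ (s[i]'h).map some ++ [none] ++ q ∧ p.count none = i := by
  intro s
  induction s with
  | nil => intro i h; simp at h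
  | cons u t ih =>
    intro i h
    match i with
    | 0 =>
      exact ⟨[], t.flatMap (fun u => u.map some ++ [none]), by simp [enc], by simp⟩
    | j+1 =>
      obtain ⟨p, q, he, hc⟩ := ih j (by simpa using h)
      refine ⟨none :: (u.map some ++ p), q, ?_, ?_⟩
      · rw [enc_cons, he]; simp
      · have : (u.map some).count (none : Option σ) = 0 := List.count_eq_zero.2 (by simp)
        simp [hc, List.count_cons, List.count_append, this]

lemma enc_uniq {σ : Type*} [DecidableEq σ] : ∀ (s : List (List σ)) (i : ℕ) (h : i < s.length)
    (p v q : List (Option σ)), none ∉ v →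
    enc s = p ++ [none] ++ v ++ [none] ++ q → p.count none = i →
    v = (s[i]'h).map some := by
  intro s
  induction s with
  | nil => intro i h; simp at h
  | cons u t ih =>
    intro i h p v q hv he hc
    subst hc
    rw [enc_cons] at he
    cases p with
    | nil =>
      simp only [List.nil_append, List.cons_append, List.cons.injEq, true_and] at he
      have he' : u.map some ++ (none : Option σ) :: t.flatMap (fun u => u.map some ++ [none])
          = v ++ none :: q := by
        simpa [enc, List.append_assoc] using he
      have := first_none (u.map some) _ v q (by simp) hv he'
      simp [this.1]
    | cons x p' =>
      have hx : x = none := by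
        have h2 := he
        simp only [List.cons_append, List.append_assoc, List.cons.injEq] at h2
        exact h2.1.symm
      subst hx
      have he' : u.map some ++ (none : Option σ) :: t.flatMap (fun u => u.map some ++ [none])
          = p' ++ [none] ++ v ++ [none] ++ q := by
        have h2 := he
        simp only [List.cons_append, List.cons.injEq, true_and] at h2
        simpa [enc, List.append_assoc] using h2
      by_cases hp : (none : Option σ) ∈ p'
      · obtain ⟨a, b, hab, hna⟩ := split_first hp
        subst hab
        have he'' : u.map some ++ (none : Option σ) :: t.flatMap (fun u => u.map some ++ [none])
            = a ++ none :: (b ++ none :: (v ++ none :: q)) := by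
          simpa [List.append_assoc] using he'
        obtain ⟨ha, hb⟩ := first_none _ _ _ _ (by simp) hna he''
        have henc : enc t = (none :: b) ++ [none] ++ v ++ [none] ++ q := by
          simp [enc, hb, List.append_assoc]
        have hca : (a.count (none : Option σ)) = 0 := List.count_eq_zero.2 hna
        have hlt : (none :: b).count (none : Option σ) < t.length := by
          simp only [List.length_cons, List.count_cons, List.count_append, hca] at h ⊢
          simp at h ⊢
          omega
        have := ih ((none :: b).count none) hlt (none :: b) v q hv henc rfl
        rw [this]
        congr 1
        have hidx : ((none : Option σ) :: (a ++ none :: b)).count none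
            = (none :: b).count none + 1 := by
          simp [List.count_cons, List.count_append, hca]
        simp only [hidx]
        rw [List.getElem_cons_succ]
      · have hfn := first_none _ _ _ _ (by simp : (none : Option σ) ∉ u.map some) hp
          (by simpa [List.append_assoc] using he' :
            u.map some ++ (none : Option σ) :: t.flatMap (fun u => u.map some ++ [none])
              = p' ++ none :: (v ++ none :: q))
        have henc : enc t = ([] : List (Option σ)) ++ [none] ++ v ++ [none] ++ q := by
          simp [enc, hfn.2]
        have hc0 : p'.count (none : Option σ) = 0 := List.count_eq_zero.2 hp
        have hlt : 0 < t.length := by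
          simp only [List.length_cons, List.count_cons, hc0] at h
          simp at h; omega
        have := ih 0 hlt [] v q hv henc (by simp)
        rw [this]
        congr 1
        have : ((none : Option σ) :: p').count none = 1 := by simp [List.count_cons, hc0]
        simp only [this]
        rw [List.getElem_cons_succ]

/-- Correctness of the sequence-read (nth/elem) encoding: the `i`-th element of `s`
occurs in `enc s` between the `(i+1)`-th and `(i+2)`-th occurrences of `†`, and this
decomposition characterizes it. -/
theorem enc_nth {σ : Type*} [DecidableEq σ] (s : List (List σ)) (i : ℕ)
    (h : i < s.length) :
    (∃ p q : List (Option σ),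
        enc s = p ++ [none] ++ (s[i]'h).map some ++ [none] ++ q ∧ p.count none = i) ∧
      (∀ p v q : List (Option σ), none ∉ v →
        enc s = p ++ [none] ++ v ++ [none] ++ q → p.count none = i →
          v = (s[i]'h).map some) := by
  exact ⟨enc_exist s i h, fun p v q hv he hc => enc_uniq s i h p v q hv he hc⟩
end

section
/- Correctness of the sequence-write encoding: let s be a string sequence, u a string over Σ, and i an index with i < length of s. Then there exist strings p and q over Σ ∪ {†} such that enc(s) = p ++ (the i-th element of s, embedded via some) ++ q, enc(s with its i-th element replaced by u) = p ++ (u embedded via some) ++ q, and the number of occurrences of † in p equals i + 1. -/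
/-- Correctness of the sequence-write encoding: writing `u` at position `i` replaces
the block of `enc s` strictly between the `(i+1)`-th and `(i+2)`-th occurrences of `†`. -/
theorem enc_write {σ : Type*} [DecidableEq σ] (s : List (List σ)) (u : List σ) (i : ℕ)
    (h : i < s.length) :
    ∃ p q : List (Option σ),
      enc s = p ++ (s[i]'h).map some ++ q ∧
        enc (s.set i u) = p ++ u.map some ++ q ∧
          p.count none = i + 1 := by
  classical
  set f : List σ → List (Option σ) := fun u => u.map some ++ [none] with hf
  refine ⟨none :: (s.take i).flatMap f, none :: (s.drop (i + 1)).flatMap f, ?_, ?_, ?_⟩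
  · have hs : s = s.take i ++ s[i] :: s.drop (i + 1) := by
      conv_lhs => rw [← List.take_append_drop i s, List.drop_eq_getElem_cons h]
    conv_lhs => rw [enc, hs, List.flatMap_append, List.flatMap_cons]
    simp [f]
  · have hs : s.set i u = s.take i ++ u :: s.drop (i + 1) := by
      rw [List.set_eq_take_append_cons_drop, if_pos h]
    rw [enc, hs, List.flatMap_append, List.flatMap_cons]
    simp [f]
  · have hcount : ∀ t : List (List σ), (t.flatMap f).count none = t.length := by
      intro t
      induction t with
      | nil => simp
      | cons a t ih =>
        simp [f, List.count_append, ih, List.count_eq_zero_of_not_mem]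
    simp [List.count_cons, hcount, List.length_take, Nat.min_eq_left h.le]
end

section
/- Correctness of the subsequence encoding: let s be a string sequence and i, j natural numbers with i + j ≤ length of s. Then there exist strings p and q over Σ ∪ {†} such that enc(s) = p ++ enc((s with its first i elements dropped), truncated to its first j elements) ++ q, the number of occurrences of † in p equals i, and the number of occurrences of † in q equals (length of s) − i − j. -/
private lemma shift {σ : Type*} (l : List (List σ)) :
    [none] ++ l.flatMap (fun u => u.map some ++ [(none : Option σ)]) =
      l.flatMap (fun u => [(none : Option σ)] ++ u.map some) ++ [none] := by
  induction l with
  | nil => rfl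
  | cons a t ih =>
      simp only [List.flatMap_cons, List.append_assoc]
      simpa using ih

private lemma count_g {σ : Type*} [DecidableEq σ] (l : List (List σ)) :
    (l.flatMap (fun u => [(none : Option σ)] ++ u.map some)).count none = l.length := by
  induction l with
  | nil => rfl
  | cons a t ih =>
      have ha : (a.map some).count (none : Option σ) = 0 := by
        simp [List.count_eq_zero]
      simp [List.count_append, ha]
      simpa using ih

private lemma count_f {σ : Type*} [DecidableEq σ] (l : List (List σ)) :
    (l.flatMap (fun u => u.map some ++ [(none : Option σ)])).count none = l.length := by
  induction l with
  | nil => rfl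
  | cons a t ih =>
      simp [List.count_append, ih, List.count_eq_zero]

/-- Correctness of the subsequence encoding: `enc ((s.drop i).take j)` occurs in `enc s`
with `i` separators before it and `s.length − i − j` separators after it. -/
theorem enc_subseq {σ : Type*} [DecidableEq σ] (s : List (List σ)) (i j : ℕ)
    (h : i + j ≤ s.length) :
    ∃ p q : List (Option σ),
      enc s = p ++ enc ((s.drop i).take j) ++ q ∧
        p.count none = i ∧ q.count none = s.length - i - j := by
  refine ⟨(s.take i).flatMap (fun u => [(none : Option σ)] ++ u.map some),
    (s.drop (i + j)).flatMap (fun u => u.map some ++ [(none : Option σ)]), ?_, ?_, ?_⟩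
  · have hdecomp : s = s.take i ++ ((s.drop i).take j ++ s.drop (i + j)) := by
      rw [← List.append_assoc, ← List.take_add, List.take_append_drop]
    unfold enc
    conv_lhs => rw [hdecomp]
    rw [List.flatMap_append, List.flatMap_append, ← List.append_assoc, shift]
    simp [List.append_assoc]
  · rw [count_g, List.length_take]
    omega
  · rw [count_f, List.length_drop]
    omega
end

section
/- Correctness of the join encoding: let s be a string sequence and v a string over Σ. Removing the first and the last letter of enc(s) and then replacing every remaining occurrence of † by v (and every letter some a by a) yields exactly join_v(s) = List.intercalate v s. Formally, ((enc s).dropLast.tail).flatMap (fun x => match x with | none => v | some a => [a]) = List.intercalate v s. -/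
lemma aux {σ : Type*} (s : List (List σ)) (v : List σ) :
    ((s.flatMap (fun u => u.map some ++ [none])).dropLast).flatMap
        (fun x => match x with | none => v | some a => [a]) =
      List.intercalate v s := by
  induction s with
  | nil => simp [List.intercalate]
  | cons u t ih =>
    cases t with
    | nil =>
      simp [List.intercalate, List.flatMap_map, List.dropLast_append_of_ne_nil]
    | cons w t' =>
      rw [List.flatMap_cons, List.append_assoc (List.map some u),
        List.dropLast_append_of_ne_nil, List.dropLast_append_of_ne_nil,
        List.flatMap_append, List.flatMap_append, List.flatMap_cons, ih]
      · simp [List.intercalate, List.intersperse, List.flatMap_map]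
      · simp [List.flatMap_cons]
      · simp [List.flatMap_cons]

/-- Correctness of the join encoding: dropping the first and last letters of `enc s`
and substituting `v` for each remaining `†` yields `join_v(s) = List.intercalate v s`. -/
theorem enc_join {σ : Type*} (s : List (List σ)) (v : List σ) :
    ((enc s).dropLast.tail).flatMap
        (fun x => match x with | none => v | some a => [a]) =
      List.intercalate v s := by
  cases s with
  | nil => simp [enc, List.intercalate]
  | cons u t =>
    rw [enc, List.singleton_append, List.dropLast_cons_of_ne_nil, List.tail_cons]
    · exact aux (u :: t) v
    · simp [List.flatMap_cons]
end

section
/- Correctness of the split encoding for a single-letter delimiter: let u be a string over Σ and d ∈ Σ a letter. Then the encoding of the sequence obtained by splitting u on d equals the string obtained from u by replacing every occurrence of d by † (and keeping all other letters), wrapped with one † at the front and one † at the back. Formally, enc (u.splitOn d) = none :: u.map (fun a => if a = d then none else some a) ++ [none]. -/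
private theorem flatMap_splitOn {σ : Type*} [DecidableEq σ] (u : List σ) (d : σ) :
    (u.splitOn d).flatMap (fun u => u.map some ++ [none]) =
      u.map (fun a => if a = d then none else some a) ++ [none] := by
  induction u with
  | nil => simp [List.splitOn_nil]
  | cons x xs ih =>
    rw [List.splitOn, List.splitOnP_cons]
    by_cases h : x = d
    · simp [h]
      simpa [List.splitOn] using ih
    · have hne : (x == d) = false := by simp [h]
      rw [hne]
      obtain ⟨hd, tl, hs⟩ : ∃ hd tl, xs.splitOnP (· == d) = hd :: tl := by
        rcases e : xs.splitOnP (· == d) with _ | ⟨hd, tl⟩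
        · exact absurd e (List.splitOnP_ne_nil _ _)
        · exact ⟨hd, tl, rfl⟩
      rw [hs]
      have := ih
      rw [List.splitOn, hs] at this
      simp only [cond_false, List.modifyHead_cons, List.flatMap_cons, List.map_cons,
        List.cons_append, if_neg h] at this ⊢
      simp [this]

/-- Correctness of the split encoding for a single-letter delimiter `d`:
`enc (u.splitOn d)` is obtained from `u` by replacing every `d` with `†` and wrapping
with a `†` at each end. -/
theorem enc_splitOn {σ : Type*} [DecidableEq σ] (u : List σ) (d : σ) :
    enc (u.splitOn d) =
      none :: u.map (fun a => if a = d then none else some a) ++ [none] := by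
  simp [enc, flatMap_splitOn]
end
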